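/- Let k ≥ 1 and let α_l ≥ 0, β_l ≥ 0 (l = 1, …, k) satisfy Σ_{l=1}^{k} α_l = 1 and β_l = 0 whenever α_l = 0. Suppose L satisfies the exponential monotonicity condition and N satisfies the forward-Euler condition with step bound h_FE > 0. Given previous steps u^{n−k+1}, …, u^n ∈ E and Δt ≥ 0 with β_l Δt ≤ α_l h_FE for all l (i.e. Δt ≤ C h_FE with C = min_{β_l≠0} α_l/β_l), define the explicit integrating factor multi-step update u^{n+1} = Σ_{l=1}^{k} exp((k − l + 1) Δt • L)(α_l • u^{n−k+l} + (Δt β_l) • N(u^{n−k+l})). Then f(u^{n+1}) ≤ max_{l=1,…,k} f(u^{n−k+l}). -/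

import Mathlib

/-- **SSP integrating factor explicit linear multi-step methods.**
If the `k`-step method has coefficients `α l, β l ≥ 0` with `∑ α l = 1` and
`β l = 0` whenever `α l = 0`, `L` satisfies the exponential monotonicity
condition, `N` satisfies the forward-Euler condition with step bound `hFE > 0`,
and `β l * Δt ≤ α l * hFE` for all `l`, then the integrating factor multi-step
update `uⁿ⁺¹ = ∑ l, exp ((k - l + 1) Δt • L) (α l • u l + Δt β l • N (u l))`
satisfies `f uⁿ⁺¹ ≤ max_l f (u l)`.  Here `u l` denotes the previous step
`u^{n-k+l}` for `l = 1, …, k`. -/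
theorem ssp_integratingFactor_multiStep
    {E : Type*} [NormedAddCommGroup E] [NormedSpace ℝ E] [FiniteDimensional ℝ E]
    (f : E → ℝ) (hf_cont : Continuous f) (hf_conv : ConvexOn ℝ Set.univ f)
    (L : E →L[ℝ] E) (N : E → E)
    (hFE : ℝ) (hFE_pos : 0 < hFE)
    (hL : ∀ (τ : ℝ), 0 ≤ τ → ∀ u : E, f (NormedSpace.exp (τ • L) u) ≤ f u)
    (hN : ∀ u : E, ∀ τ : ℝ, 0 ≤ τ → τ ≤ hFE → f (u + τ • N u) ≤ f u)
    (k : ℕ) (hk : 1 ≤ k)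
    (α β : ℕ → ℝ)
    (hα_nonneg : ∀ l, 1 ≤ l → l ≤ k → 0 ≤ α l)
    (hβ_nonneg : ∀ l, 1 ≤ l → l ≤ k → 0 ≤ β l)
    (hα_sum : ∑ l ∈ Finset.Icc 1 k, α l = 1)
    (hβ_zero : ∀ l, 1 ≤ l → l ≤ k → α l = 0 → β l = 0)
    (u : ℕ → E) (Δt : ℝ) (hΔt : 0 ≤ Δt)
    (hstep : ∀ l, 1 ≤ l → l ≤ k → β l * Δt ≤ α l * hFE)
    (unext : E)
    (hunext : unext = ∑ l ∈ Finset.Icc 1 k,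
      NormedSpace.exp ((((k : ℝ) - l + 1) * Δt) • L)
        (α l • u l + (Δt * β l) • N (u l))) :
    f unext ≤ (Finset.Icc 1 k).sup' (by
      exact Finset.nonempty_Icc.mpr hk) (fun l => f (u l)) := by
  classical
  set M := (Finset.Icc 1 k).sup' (Finset.nonempty_Icc.mpr hk) (fun l => f (u l)) with hM
  set p : ℕ → E := fun l => if α l = 0 then u l else u l + (Δt * β l / α l) • N (u l) with hp
  have hrw : unext = ∑ l ∈ Finset.Icc 1 k,
      α l • (NormedSpace.exp ((((k : ℝ) - l + 1) * Δt) • L) (p l)) := by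
    rw [hunext]
    refine Finset.sum_congr rfl fun l hl => ?_
    obtain ⟨h1, h2⟩ := Finset.mem_Icc.mp hl
    rw [← map_smul]
    congr 1
    by_cases h : α l = 0
    · simp [hp, h, hβ_zero l h1 h2 h]
    · simp only [hp, if_neg h, smul_add, smul_smul]
      congr 2
      field_simp
  have key : ∀ l ∈ Finset.Icc 1 k,
      f (NormedSpace.exp ((((k : ℝ) - l + 1) * Δt) • L) (p l)) ≤ M := by
    intro l hl
    obtain ⟨h1, h2⟩ := Finset.mem_Icc.mp hl
    have hτ : 0 ≤ ((k : ℝ) - l + 1) * Δt := by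
      apply mul_nonneg _ hΔt
      have : (l : ℝ) ≤ k := Nat.cast_le.mpr h2
      linarith
    refine le_trans (hL _ hτ _) (le_trans ?_ (Finset.le_sup' (fun l => f (u l)) hl))
    by_cases h : α l = 0
    · simp [hp, h]
    · have hαpos : 0 < α l := lt_of_le_of_ne (hα_nonneg l h1 h2) (Ne.symm h)
      have hβl := hβ_nonneg l h1 h2
      simp only [hp, if_neg h]
      refine hN _ _ (by positivity) ?_
      rw [div_le_iff₀ hαpos]
      calc Δt * β l = β l * Δt := by ring
        _ ≤ α l * hFE := hstep l h1 h2
        _ = hFE * α l := by ring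
  calc f unext ≤ ∑ l ∈ Finset.Icc 1 k,
        α l * f (NormedSpace.exp ((((k : ℝ) - l + 1) * Δt) • L) (p l)) := by
        rw [hrw]
        exact hf_conv.map_sum_le (fun l hl => hα_nonneg l (Finset.mem_Icc.mp hl).1
          (Finset.mem_Icc.mp hl).2) hα_sum (fun _ _ => Set.mem_univ _)
    _ ≤ ∑ l ∈ Finset.Icc 1 k, α l * M := by
        refine Finset.sum_le_sum fun l hl => ?_
        exact mul_le_mul_of_nonneg_left (key l hl)
          (hα_nonneg l (Finset.mem_Icc.mp hl).1 (Finset.mem_Icc.mp hl).2)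
    _ = M := by rw [← Finset.sum_mul, hα_sum, one_mul]
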